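/- Let ε ∈ (0,1] and equip ℂ with the norm |w| := |w|_∞^ε, where |·|_∞ is the usual absolute value; write D⁺(α,ρ) := {z ∈ ℂ : |z−α| ≤ ρ} for the corresponding closed disc. Let a,b,c,d ∈ ℂ with c ≠ 0 and ad−bc ≠ 0, let γ(z) = (az+b)/(cz+d), and let α ∈ ℂ and ρ > 0 satisfy |α + d/c| > ρ. Then γ maps D⁺(α,ρ) bijectively onto the closed disc D⁺(w₀, r₀) with center w₀ = a/c − ((ad−bc)/c²)·(conjugate of (α+d/c))/(|α+d/c|^{2/ε} − ρ^{2/ε}) and radius r₀ = |ad−bc|·ρ / (|c|²·(|α+d/c|^{2/ε} − ρ^{2/ε})^{ε}), where all norms |·| are the ε-norm. (This is the Archimedean case of Lemma 2.12 describing the image of a disc under a Möbius transformation.) -/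

import Mathlib

open Complex

private lemma norm_id_aux (β u : ℂ) (R : ℝ) :
    ‖(starRingEnd ℂ) β * u - ((‖β‖ ^ 2 - R ^ 2 : ℝ) : ℂ)‖ ^ 2 - R ^ 2 * ‖u‖ ^ 2
      = (‖β‖ ^ 2 - R ^ 2) * (‖u - β‖ ^ 2 - R ^ 2) := by
  have h : ∀ w : ℂ, ‖w‖ ^ 2 = w.re * w.re + w.im * w.im := by
    intro w
    rw [← Complex.normSq_apply, Complex.sq_norm]
  simp only [h]
  simp only [Complex.sub_re, Complex.sub_im, Complex.mul_re, Complex.mul_im,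
    Complex.conj_re, Complex.conj_im, Complex.ofReal_re, Complex.ofReal_im]
  ring

private lemma czd_eq (c d z : ℂ) (hc : c ≠ 0) : c * z + d = c * (z + d / c) := by
  rw [mul_add, mul_div_cancel₀ _ hc]

private lemma alg1 (a b c d u q E : ℂ) (hc : c ≠ 0) (hE : E ≠ 0) (hu : u ≠ 0) :
    (a * (u - d / c) + b) / (c * u) - (a / c - (a * d - b * c) / c ^ 2 * q / E)
      = (a * d - b * c) / (c ^ 2 * E * u) * (q * u - E) := by
  obtain ⟨e, rfl⟩ : ∃ e, d = c * e := ⟨d / c, by field_simp⟩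
  rw [mul_div_cancel_left₀ _ hc]
  have hcu : c * u ≠ 0 := mul_ne_zero hc hu
  have hc2E : c ^ 2 * E ≠ 0 := mul_ne_zero (pow_ne_zero 2 hc) hE
  have hden : c ^ 2 * E * u ≠ 0 := mul_ne_zero hc2E hu
  have h1 : (a * (u - e) + b) / (c * u) = a / c - (a * e - b) / (c * u) := by
    rw [div_sub_div _ _ hc hcu, div_eq_div_iff hcu (mul_ne_zero hc hcu)]
    ring
  rw [h1, show a / c - (a * e - b) / (c * u) - (a / c - (a * (c * e) - b * c) / c ^ 2 * q / E)
      = (a * (c * e) - b * c) / c ^ 2 * q / E - (a * e - b) / (c * u) by ring,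
    div_mul_eq_mul_div, div_div, div_sub_div _ _ hc2E hcu, div_mul_eq_mul_div,
    div_eq_div_iff (mul_ne_zero hc2E hcu) hden]
  ring

private lemma key_iff (a b c d β : ℂ) (R : ℝ) (hR : 0 < R) (hc : c ≠ 0)
    (hdet : a * d - b * c ≠ 0) (hβR : R < ‖β‖) (z : ℂ) (hu : z + d / c ≠ 0) :
    (‖(a * z + b) / (c * z + d) - (a / c - (a * d - b * c) / c ^ 2 * (starRingEnd ℂ) β /
        ((‖β‖ ^ 2 - R ^ 2 : ℝ) : ℂ))‖ ≤ ‖a * d - b * c‖ * R / (‖c‖ ^ 2 * (‖β‖ ^ 2 - R ^ 2))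
      ↔ ‖(z + d / c) - β‖ ≤ R) := by
  have hD : (0:ℝ) < ‖β‖ ^ 2 - R ^ 2 := by nlinarith [norm_nonneg β]
  have hid := norm_id_aux β (z + d / c) R
  obtain ⟨D, hDg⟩ : ∃ D : ℝ, ‖β‖ ^ 2 - R ^ 2 = D := ⟨_, rfl⟩
  rw [hDg] at hD hid ⊢
  have hDC : ((D : ℝ) : ℂ) ≠ 0 := by exact_mod_cast hD.ne'
  have hupos : (0:ℝ) < ‖z + d / c‖ := norm_pos_iff.mpr hu
  have hcpos : (0:ℝ) < ‖c‖ := norm_pos_iff.mpr hc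
  have hdetpos : (0:ℝ) < ‖a * d - b * c‖ := norm_pos_iff.mpr hdet
  have hK : (0:ℝ) < ‖a * d - b * c‖ / (‖c‖ ^ 2 * D) := div_pos hdetpos (by positivity)
  rw [czd_eq c d z hc, show a * z + b = a * ((z + d / c) - d / c) + b by ring,
    alg1 a b c d (z + d / c) ((starRingEnd ℂ) β) _ hc hDC hu]
  have e1 : ‖(a * d - b * c) / (c ^ 2 * ((D : ℝ) : ℂ) * (z + d / c))‖
      = ‖a * d - b * c‖ / (‖c‖ ^ 2 * D * ‖z + d / c‖) := by
    rw [norm_div, norm_mul, norm_mul, norm_pow, Complex.norm_real,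
      Real.norm_eq_abs, abs_of_pos hD]
  rw [norm_mul, e1, show ‖a * d - b * c‖ / (‖c‖ ^ 2 * D * ‖z + d / c‖) *
        ‖(starRingEnd ℂ) β * (z + d / c) - ((D : ℝ) : ℂ)‖
      = ‖a * d - b * c‖ / (‖c‖ ^ 2 * D) *
        (‖(starRingEnd ℂ) β * (z + d / c) - ((D : ℝ) : ℂ)‖ / ‖z + d / c‖) by
      field_simp,
    show ‖a * d - b * c‖ * R / (‖c‖ ^ 2 * D)
      = ‖a * d - b * c‖ / (‖c‖ ^ 2 * D) * R by ring,
    mul_le_mul_iff_right₀ hK, div_le_iff₀ hupos]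
  rw [← pow_le_pow_iff_left₀ (norm_nonneg _) (mul_nonneg hR.le (norm_nonneg _)) two_ne_zero,
    ← pow_le_pow_iff_left₀ (norm_nonneg (z + d / c - β)) hR.le two_ne_zero]
  constructor
  · intro h
    nlinarith [hid, hD, sq_nonneg ‖z + d / c‖]
  · intro h
    nlinarith [hid, hD, sq_nonneg ‖z + d / c‖]

private lemma moebius_core (a b c d α : ℂ) (R : ℝ) (hR : 0 < R) (hc : c ≠ 0)
    (hdet : a * d - b * c ≠ 0) (hsep : R < ‖α + d / c‖) :
    (∀ z : ℂ, ‖z - α‖ ≤ R → c * z + d ≠ 0) ∧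
    Set.BijOn (fun z : ℂ => (a * z + b) / (c * z + d))
      {z : ℂ | ‖z - α‖ ≤ R}
      {w : ℂ | ‖w - (a / c - (a * d - b * c) / c ^ 2 * (starRingEnd ℂ) (α + d / c) /
            ((‖α + d / c‖ ^ 2 - R ^ 2 : ℝ) : ℂ))‖ ≤
          ‖a * d - b * c‖ * R / (‖c‖ ^ 2 * (‖α + d / c‖ ^ 2 - R ^ 2))} := by
  have hD : (0:ℝ) < ‖α + d / c‖ ^ 2 - R ^ 2 := by nlinarith [norm_nonneg (α + d / c)]
  have hcpos : (0:ℝ) < ‖c‖ := norm_pos_iff.mpr hc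
  have hdetpos : (0:ℝ) < ‖a * d - b * c‖ := norm_pos_iff.mpr hdet
  have hmem : ∀ z : ℂ, ‖z - α‖ ≤ R → z + d / c ≠ 0 := by
    intro z hz h0
    have : z - α = -(α + d / c) := by linear_combination h0
    rw [this, norm_neg] at hz
    exact absurd hz (not_le.mpr hsep)
  have hzu : ∀ z : ℂ, z - α = (z + d / c) - (α + d / c) := by intro z; ring
  have hne : ∀ z : ℂ, ‖z - α‖ ≤ R → c * z + d ≠ 0 := by
    intro z hz
    rw [czd_eq c d z hc]
    exact mul_ne_zero hc (hmem z hz)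
  refine ⟨hne, ?_, ?_, ?_⟩
  · intro z hz
    simp only [Set.mem_setOf_eq] at hz ⊢
    rw [key_iff a b c d _ R hR hc hdet hsep z (hmem z hz), ← hzu]
    exact hz
  · intro z₁ hz₁ z₂ hz₂ hf
    simp only [Set.mem_setOf_eq] at hz₁ hz₂
    have h1 := hne z₁ hz₁
    have h2 := hne z₂ hz₂
    simp only at hf
    rw [div_eq_div_iff h1 h2] at hf
    have hz : (a * d - b * c) * (z₁ - z₂) = 0 := by linear_combination hf
    rcases mul_eq_zero.mp hz with h | h
    · exact absurd h hdet
    · exact sub_eq_zero.mp h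
  · intro w hw
    simp only [Set.mem_setOf_eq] at hw
    have haw : a - c * w ≠ 0 := by
      intro h0
      have hwac : w = a / c := by
        rw [eq_div_iff hc]; linear_combination -h0
      rw [hwac] at hw
      have hcenter : a / c - (a / c - (a * d - b * c) / c ^ 2 * (starRingEnd ℂ) (α + d / c) /
            ((‖α + d / c‖ ^ 2 - R ^ 2 : ℝ) : ℂ))
          = (a * d - b * c) / c ^ 2 * (starRingEnd ℂ) (α + d / c) /
            ((‖α + d / c‖ ^ 2 - R ^ 2 : ℝ) : ℂ) := by ring
      rw [hcenter] at hw
      have hnval : ‖(a * d - b * c) / c ^ 2 * (starRingEnd ℂ) (α + d / c) /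
            ((‖α + d / c‖ ^ 2 - R ^ 2 : ℝ) : ℂ)‖
          = ‖a * d - b * c‖ * ‖α + d / c‖ / (‖c‖ ^ 2 * (‖α + d / c‖ ^ 2 - R ^ 2)) := by
        rw [norm_div, norm_mul, norm_div, norm_pow, Complex.norm_real,
          Real.norm_eq_abs, abs_of_pos hD, RCLike.norm_conj,
          div_mul_eq_mul_div, div_div]
      rw [hnval] at hw
      have hpos : (0:ℝ) < ‖c‖ ^ 2 * (‖α + d / c‖ ^ 2 - R ^ 2) := by positivity
      rw [div_le_div_iff₀ hpos hpos] at hw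
      nlinarith [mul_pos hdetpos hpos]
    have hu : (d * w - b) / (a - c * w) + d / c = (a * d - b * c) / (c * (a - c * w)) := by
      rw [div_add_div _ _ haw hc, div_eq_div_iff (mul_ne_zero haw hc) (mul_ne_zero hc haw)]
      ring
    have hu0 : (d * w - b) / (a - c * w) + d / c ≠ 0 := by
      rw [hu]
      exact div_ne_zero hdet (mul_ne_zero hc haw)
    have hA : a * ((d * w - b) / (a - c * w)) + b = (a * d - b * c) * w / (a - c * w) := by
      rw [mul_div_assoc', div_add' _ _ _ haw, div_eq_div_iff haw haw]
      ring
    have hB : c * ((d * w - b) / (a - c * w)) + d = (a * d - b * c) / (a - c * w) := by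
      field_simp
      ring
    have hfz : (a * ((d * w - b) / (a - c * w)) + b) / (c * ((d * w - b) / (a - c * w)) + d)
        = w := by
      rw [hA, hB]
      rw [div_div_div_cancel_right₀]
      · exact mul_div_cancel_left₀ w hdet
      · exact haw
    refine ⟨(d * w - b) / (a - c * w), ?_, ?_⟩
    · simp only [Set.mem_setOf_eq]
      rw [hzu, ← key_iff a b c d _ R hR hc hdet hsep _ hu0, hfz]
      exact hw
    · simp only
      exact hfz

/-- **Archimedean case of Lemma 2.12**: the image of a closed disc (for the norm
`|w| = |w|_∞^ε`) under a Möbius transformation is again a closed disc, with explicit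
center and radius. -/
theorem moebius_image_of_disc_archimedean
    (ε : ℝ) (hε0 : 0 < ε) (hε1 : ε ≤ 1) (a b c d α : ℂ) (ρ : ℝ) (hρ : 0 < ρ)
    (hc : c ≠ 0) (hdet : a * d - b * c ≠ 0)
    (hsep : ρ < ‖α + d / c‖ ^ ε) :
    (∀ z : ℂ, ‖z - α‖ ^ ε ≤ ρ → c * z + d ≠ 0) ∧
    Set.BijOn (fun z : ℂ => (a * z + b) / (c * z + d))
      {z : ℂ | ‖z - α‖ ^ ε ≤ ρ}
      {w : ℂ | ‖w - (a / c - (a * d - b * c) / c ^ 2 * (starRingEnd ℂ) (α + d / c) /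
            ((((‖α + d / c‖ ^ ε) ^ (2 / ε) - ρ ^ (2 / ε) : ℝ)) : ℂ))‖ ^ ε ≤
          (‖a * d - b * c‖ ^ ε) * ρ /
            ((‖c‖ ^ ε) ^ 2 * ((‖α + d / c‖ ^ ε) ^ (2 / ε) - ρ ^ (2 / ε)) ^ ε)} := by
  obtain ⟨R, hRdef⟩ : ∃ R : ℝ, ρ ^ (1 / ε) = R := ⟨_, rfl⟩
  have hRpos : 0 < R := hRdef ▸ Real.rpow_pos_of_pos hρ _
  have hρR : ρ = R ^ ε := by
    rw [← hRdef, ← Real.rpow_mul hρ.le, one_div, inv_mul_cancel₀ hε0.ne', Real.rpow_one]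
  have hβ : R < ‖α + d / c‖ := by
    rw [hρR] at hsep
    exact (Real.rpow_lt_rpow_iff hRpos.le (norm_nonneg _) hε0).mp hsep
  have hDpos : (0:ℝ) < ‖α + d / c‖ ^ 2 - R ^ 2 := by
    nlinarith [norm_nonneg (α + d / c)]
  obtain ⟨h1, h2⟩ := moebius_core a b c d α R hRpos hc hdet hβ
  have hpow2 : ∀ x : ℝ, 0 ≤ x → (x ^ ε) ^ (2 / ε) = x ^ 2 := by
    intro x hx
    rw [← Real.rpow_mul hx, show ε * (2 / ε) = 2 by field_simp,
      show (2:ℝ) = ((2:ℕ):ℝ) by norm_num, Real.rpow_natCast]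
  have hsw : (‖c‖ ^ ε) ^ (2:ℕ) = (‖c‖ ^ (2:ℕ)) ^ ε := by
    rw [← Real.rpow_natCast (‖c‖ ^ ε) 2, ← Real.rpow_mul (norm_nonneg c),
      ← Real.rpow_natCast ‖c‖ 2, ← Real.rpow_mul (norm_nonneg c), mul_comm]
  have hD2 : (‖α + d / c‖ ^ ε) ^ (2 / ε) - (R ^ ε) ^ (2 / ε)
      = ‖α + d / c‖ ^ 2 - R ^ 2 := by
    rw [hpow2 _ (norm_nonneg _), hpow2 _ hRpos.le]
  have hrad : ‖a * d - b * c‖ ^ ε * R ^ ε / ((‖c‖ ^ ε) ^ 2 * (‖α + d / c‖ ^ 2 - R ^ 2) ^ ε)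
      = (‖a * d - b * c‖ * R / (‖c‖ ^ 2 * (‖α + d / c‖ ^ 2 - R ^ 2))) ^ ε := by
    rw [hsw, ← Real.mul_rpow (norm_nonneg _) hRpos.le,
      ← Real.mul_rpow (pow_nonneg (norm_nonneg c) 2) hDpos.le,
      ← Real.div_rpow (by positivity) (by positivity)]
  have hr₀ : (0:ℝ) ≤ ‖a * d - b * c‖ * R / (‖c‖ ^ 2 * (‖α + d / c‖ ^ 2 - R ^ 2)) := by
    positivity
  rw [hρR]
  constructor
  · intro z hz
    exact h1 z ((Real.rpow_le_rpow_iff (norm_nonneg _) hRpos.le hε0).mp hz)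
  · have hset1 : {z : ℂ | ‖z - α‖ ^ ε ≤ R ^ ε} = {z : ℂ | ‖z - α‖ ≤ R} := by
      ext z
      exact Real.rpow_le_rpow_iff (norm_nonneg _) hRpos.le hε0
    have hset2 : {w : ℂ | ‖w - (a / c - (a * d - b * c) / c ^ 2 *
            (starRingEnd ℂ) (α + d / c) /
            ((((‖α + d / c‖ ^ ε) ^ (2 / ε) - (R ^ ε) ^ (2 / ε) : ℝ)) : ℂ))‖ ^ ε ≤
          (‖a * d - b * c‖ ^ ε) * R ^ ε /
            ((‖c‖ ^ ε) ^ 2 * ((‖α + d / c‖ ^ ε) ^ (2 / ε) - (R ^ ε) ^ (2 / ε)) ^ ε)}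
        = {w : ℂ | ‖w - (a / c - (a * d - b * c) / c ^ 2 * (starRingEnd ℂ) (α + d / c) /
            ((‖α + d / c‖ ^ 2 - R ^ 2 : ℝ) : ℂ))‖ ≤
          ‖a * d - b * c‖ * R / (‖c‖ ^ 2 * (‖α + d / c‖ ^ 2 - R ^ 2))} := by
      ext w
      rw [Set.mem_setOf_eq, Set.mem_setOf_eq, hD2, hrad]
      exact Real.rpow_le_rpow_iff (norm_nonneg _) hr₀ hε0
    rw [hset1, hset2]
    exact h2
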